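/- If x : [0, t₀) → ℝ is a C¹ function with x(0) = 0, x(t) ≥ 0, and x'(t) ≤ (2/t + P) x(t) for all t ∈ (0, t₀), and moreover x(t)/t² → 0 as t → 0⁺, then x ≡ 0 on [0, t₀). -/

import Mathlib

open Set Filter Topology

/-- If `x : [0,t₀) → ℝ` is continuous, differentiable on `(0,t₀)` with `x 0 = 0`, `x ≥ 0`,
`x' t ≤ (2/t + P) x t` on `(0,t₀)`, and `x t / t² → 0` as `t → 0⁺`, then `x ≡ 0` on `[0,t₀)`. -/
theorem gronwall_singular_vanishes
    (P t₀ : ℝ) (hP : 0 ≤ P) (ht₀ : 0 < t₀) (x x' : ℝ → ℝ)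
    (hcont : ContinuousOn x (Set.Ico 0 t₀))
    (hderiv : ∀ t ∈ Set.Ioo 0 t₀, HasDerivAt x (x' t) t)
    (hzero : x 0 = 0)
    (hnonneg : ∀ t ∈ Set.Ico 0 t₀, 0 ≤ x t)
    (hineq : ∀ t ∈ Set.Ioo 0 t₀, x' t ≤ (2 / t + P) * x t)
    (hlim : Tendsto (fun t => x t / t ^ 2) (𝓝[>] 0) (𝓝 0)) :
    ∀ t ∈ Set.Ico 0 t₀, x t = 0 := by
  set g : ℝ → ℝ := fun s => x s * Real.exp (-P * s) / s ^ 2 with hg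
  -- derivative of g
  have hgderiv : ∀ s ∈ Set.Ioo 0 t₀, HasDerivAt g
      (((x' s * Real.exp (-P * s) + x s * (Real.exp (-P * s) * (-P))) * s ^ 2
        - x s * Real.exp (-P * s) * (2 * s)) / (s ^ 2) ^ 2) s := by
    intro s hs
    have hE : HasDerivAt (fun u : ℝ => Real.exp (-P * u)) (Real.exp (-P * s) * (-P)) s := by
      have h1 : HasDerivAt (fun u : ℝ => -P * u) (-P) s := by
        simpa using (hasDerivAt_id s).const_mul (-P)
      exact (Real.hasDerivAt_exp (-P * s)).comp s h1
    have hnum : HasDerivAt (fun u => x u * Real.exp (-P * u))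
        (x' s * Real.exp (-P * s) + x s * (Real.exp (-P * s) * (-P))) s :=
      (hderiv s hs).mul hE
    have hden : HasDerivAt (fun u : ℝ => u ^ 2) (2 * s) s := by
      simpa [mul_comm] using hasDerivAt_pow 2 s
    have hs0 : (s : ℝ) ^ 2 ≠ 0 := pow_ne_zero 2 (ne_of_gt hs.1)
    simpa [hg, mul_comm, Pi.div_def] using hnum.div hden hs0
  -- g is antitone on Ioo 0 t₀
  have hanti : AntitoneOn g (Set.Ioo 0 t₀) := by
    apply antitoneOn_of_deriv_nonpos (convex_Ioo 0 t₀)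
    · intro s hs
      exact ((hgderiv s hs).continuousAt).continuousWithinAt
    · rw [interior_Ioo]
      intro s hs
      exact ((hgderiv s hs).differentiableAt).differentiableWithinAt
    · rw [interior_Ioo]
      intro s hs
      rw [(hgderiv s hs).deriv]
      have hsp := hs.1
      have hE : (0:ℝ) < Real.exp (-P * s) := Real.exp_pos _
      have hx := hineq s hs
      have hxs : x' s ≤ (2 / s + P) * x s := hx
      have key : (x' s * Real.exp (-P * s) + x s * (Real.exp (-P * s) * (-P))) * s ^ 2
          - x s * Real.exp (-P * s) * (2 * s) ≤ 0 := by
        have h2 : x' s * s ≤ 2 * x s + P * x s * s := by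
          have := mul_le_mul_of_nonneg_right hxs (le_of_lt hsp)
          calc x' s * s ≤ (2 / s + P) * x s * s := this
            _ = 2 * x s + P * x s * s := by field_simp
        nlinarith [mul_le_mul_of_nonneg_right h2 (mul_pos hE hsp).le]
      exact div_nonpos_of_nonpos_of_nonneg key (by positivity)
  -- g tends to 0 at 0⁺
  have hgl : Tendsto g (𝓝[>] 0) (𝓝 0) := by
    have hE : Tendsto (fun s : ℝ => Real.exp (-P * s)) (𝓝[>] 0) (𝓝 1) := by
      have : Tendsto (fun s : ℝ => Real.exp (-P * s)) (𝓝 0) (𝓝 (Real.exp (-P * 0))) :=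
        (Real.continuous_exp.comp (continuous_const.mul continuous_id)).tendsto 0
      simpa using this.mono_left nhdsWithin_le_nhds
    have heq : ∀ a : ℝ, (fun t => x t / t ^ 2) a * Real.exp (-P * a) = g a := by
      intro a; rw [hg]; ring
    have h2 := (hlim.mul hE).congr heq
    simpa using h2
  -- conclude
  intro t ht
  rcases eq_or_lt_of_le ht.1 with h0 | h0
  · rw [← h0]; exact hzero
  have htI : t ∈ Set.Ioo 0 t₀ := ⟨h0, ht.2⟩
  have hev : ∀ᶠ a in 𝓝[>] (0:ℝ), g t ≤ g a := by
    filter_upwards [Ioo_mem_nhdsGT_of_mem (by constructor <;> [rfl; exact h0] :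
      (0:ℝ) ∈ Set.Ico 0 t)] with a ha
    exact hanti ⟨ha.1, lt_trans ha.2 ht.2⟩ htI ha.2.le
  have hle : g t ≤ 0 := ge_of_tendsto hgl hev
  have hE : (0:ℝ) < Real.exp (-P * t) := Real.exp_pos _
  have ht2 : (0:ℝ) < t ^ 2 := by positivity
  have hx0 : x t ≤ 0 := by
    have := hle
    rw [hg] at this
    simp only [div_nonpos_iff] at this
    rcases this with ⟨h1, _⟩ | ⟨h1, h2⟩
    · nlinarith
    · nlinarith
  exact le_antisymm hx0 (hnonneg t ht)
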